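/- Let R_{2N} be the ring (cycle) graph on vertices {0, 1, …, 2N−1}, N ≥ 3, with unit weights between i and i+1 (mod 2N) and all other weights zero, and let V_1 = {0, 2, 4, …, 2N−2} be the even-indexed vertices. Then the Kron reduction K(L,V_1) of the Laplacian of R_{2N} is the graph Laplacian of the ring graph on the N vertices of V_1 in which consecutive kept vertices (2i and 2i+2 mod 2N) are joined by edges of weight 1/2 (and there are no other edges). -/

import Mathlib

open Matrix

noncomputable def deg {n : Type*} [Fintype n] (W : Matrix n n ℝ) (i : n) : ℝ := ∑ j, W i j

noncomputable def lap {n : Type*} [Fintype n] [DecidableEq n] (W : Matrix n n ℝ) :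
    Matrix n n ℝ :=
  Matrix.diagonal (deg W) - W

def IsConn {n : Type*} (W : Matrix n n ℝ) : Prop :=
  ∀ i j : n, Relation.ReflTransGen (fun a b => 0 < W a b) i j

def IsBipartiteWith {n : Type*} (W : Matrix n n ℝ) (V1 : Set n) : Prop :=
  ∀ i j, 0 < W i j → (i ∈ V1 ↔ j ∉ V1)

open Classical in
noncomputable def sortedEigs {n : Type*} [Fintype n] [DecidableEq n] (A : Matrix n n ℝ) :
    Fin (Fintype.card n) → ℝ :=
  if h : A.IsHermitian then
    (fun i => h.eigenvalues ((Fintype.equivFin n).symm i)) ∘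
      ⇑(Tuple.sort fun i => h.eigenvalues ((Fintype.equivFin n).symm i))
  else 0

noncomputable def kron {n : Type*} [Fintype n] [DecidableEq n] (L : Matrix n n ℝ)
    (V1 : Finset n) : Matrix ↥V1 ↥V1 ℝ :=
  L.submatrix (Subtype.val : ↥V1 → n) (Subtype.val : ↥V1 → n) -
    L.submatrix (Subtype.val : ↥V1 → n) (Subtype.val : ↥(V1ᶜ) → n) *
      (L.submatrix (Subtype.val : ↥(V1ᶜ) → n) (Subtype.val : ↥(V1ᶜ) → n))⁻¹ *
      L.submatrix (Subtype.val : ↥(V1ᶜ) → n) (Subtype.val : ↥V1 → n)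

noncomputable def wred {m : Type*} [DecidableEq m] (K : Matrix m m ℝ) : Matrix m m ℝ :=
  Matrix.of fun i j => if i = j then 0 else -K i j

open scoped Fin.NatCast Fin.CommRing

section ring
variable {n : ℕ} [NeZero n] (hn : 6 ≤ n) (hdvd : 2 ∣ n)

noncomputable def Wr (n : ℕ) [NeZero n] : Matrix (Fin n) (Fin n) ℝ :=
  Matrix.of fun i j => if j = i + 1 ∨ i = j + 1 then (1 : ℝ) else 0

lemma valcast (a : ℕ) (ha : a < n) : ((a : Fin n)).val = a := by
  rw [Fin.val_natCast, Nat.mod_eq_of_lt ha]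

include hn in
lemma two_val : (2 : Fin n).val = 2 := by
  have h : ((2:ℕ) : Fin n).val = 2 := valcast 2 (by omega)
  rwa [show ((2:ℕ) : Fin n) = (2 : Fin n) by norm_num] at h

include hn in
lemma two_ne : (2 : Fin n) ≠ 0 := by
  intro h0
  have h := two_val (n := n) hn
  rw [h0] at h; simp at h

include hn in
lemma four_ne : (4 : Fin n) ≠ 0 := by
  have h : ((4:ℕ) : Fin n).val = 4 := valcast 4 (by omega)
  intro h0
  rw [show ((4:ℕ) : Fin n) = (4 : Fin n) by norm_num, h0] at h
  simp at h

include hn in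
lemma add_one_ne_sub_one (i : Fin n) : i + 1 ≠ i - 1 := by
  intro h
  have h2 := sub_eq_zero_of_eq h
  rw [show (i+1)-(i-1) = 2 by ring] at h2
  exact two_ne hn h2

include hn in
lemma Wr_apply (i j : Fin n) :
    Wr n i j = (if j = i + 1 then (1:ℝ) else 0) + (if j = i - 1 then (1:ℝ) else 0) := by
  have hne := add_one_ne_sub_one hn i
  have h2 : (i = j + 1) = (j = i - 1) := by
    apply propext; constructor <;> intro h <;> subst h <;> simp
  simp only [Wr, Matrix.of_apply, h2]
  by_cases hA : j = i + 1 <;> by_cases hB : j = i - 1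
  · exact absurd (hA.symm.trans hB) hne
  · rw [if_pos (Or.inl hA), if_pos hA, if_neg hB]; ring
  · rw [if_pos (Or.inr hB), if_neg hA, if_pos hB]; ring
  · rw [if_neg (by tauto), if_neg hA, if_neg hB]; ring

include hn in
lemma Wr_sum (f : Fin n → ℝ) (i : Fin n) :
    ∑ j, Wr n i j * f j = f (i + 1) + f (i - 1) := by
  have hne := add_one_ne_sub_one hn i
  have key : ∀ j, Wr n i j * f j =
      (if j = i + 1 then f j else 0) + (if j = i - 1 then f j else 0) := by
    intro j
    rw [Wr_apply hn]
    by_cases hA : j = i + 1 <;> by_cases hB : j = i - 1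
    · exact absurd (hA.symm.trans hB) hne
    · subst hA; rw [if_pos rfl, if_pos rfl, if_neg hB, if_neg hB]; ring
    · subst hB; rw [if_neg hA, if_neg hA, if_pos rfl, if_pos rfl]; ring
    · rw [if_neg hA, if_neg hA, if_neg hB, if_neg hB]; ring
  simp only [key, Finset.sum_add_distrib, Finset.sum_ite_eq' Finset.univ,
    Finset.mem_univ, if_true]

omit [NeZero n] in
lemma Wr_symm [NeZero n] (i j : Fin n) : Wr n i j = Wr n j i := by
  simp [Wr, or_comm]

include hn in
lemma deg_Wr (i : Fin n) : deg (Wr n) i = 2 := by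
  have h := Wr_sum hn (fun _ => (1:ℝ)) i
  simp only [mul_one] at h
  rw [deg, h]; norm_num

include hn in
lemma lap_Wr (i j : Fin n) :
    lap (Wr n) i j = (if i = j then (2:ℝ) else 0) - Wr n i j := by
  rcases eq_or_ne i j with h | h
  · simp [lap, h, Matrix.diagonal, deg_Wr hn]
  · simp [lap, h, Matrix.diagonal_apply_ne _ h]

include hn hdvd in
lemma parity_add (i : Fin n) (a : ℕ) : ((i + (a : Fin n)).val) % 2 = (i.val + a) % 2 := by
  rw [Fin.add_def, Fin.val_natCast, Nat.mod_mod_of_dvd _ hdvd]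
  have h1 := Nat.mod_mod_of_dvd a hdvd
  omega

include hn hdvd in
lemma parity_succ (i : Fin n) : ((i + 1).val) % 2 = (i.val + 1) % 2 := by
  have := parity_add hn hdvd i 1
  simpa using this

include hn hdvd in
lemma Wr_eq_zero_of_parity (i j : Fin n) (h : i.val % 2 = j.val % 2) : Wr n i j = 0 := by
  rw [Wr, Matrix.of_apply, if_neg]
  push_neg
  constructor
  · intro hj
    have := parity_succ hn hdvd i
    rw [hj] at h
    omega
  · intro hj
    have := parity_succ hn hdvd j
    rw [hj] at h
    omega

include hn in
lemma cond_iff (x y : Fin n) : ((x.val + 2) % n = y.val) ↔ y = x + 2 := by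
  rw [Fin.ext_iff, Fin.add_def, two_val hn, eq_comm]

include hn in
lemma W_eq :
    (Matrix.of fun i j : Fin n =>
      if (i.1 + 1) % n = j.1 ∨ (j.1 + 1) % n = i.1 then (1:ℝ) else 0) = Wr n := by
  have h1 : (1 : Fin n).val = 1 := by
    rw [← Nat.cast_one, valcast 1 (by omega)]
  ext i j
  simp only [Matrix.of_apply, Wr]
  congr 1
  apply propext
  have e1 : ((i.1 + 1) % n = j.1) ↔ j = i + 1 := by
    rw [Fin.ext_iff, Fin.add_def, h1, eq_comm]
  have e2 : ((j.1 + 1) % n = i.1) ↔ i = j + 1 := by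
    rw [Fin.ext_iff, Fin.add_def, h1, eq_comm]
  rw [e1, e2]

include hn in
lemma sub_two (i : Fin n) : i - 2 = i + ((n - 2 : ℕ) : Fin n) := by
  have h : ((n - 2 : ℕ) : Fin n) = -2 := by
    rw [Nat.cast_sub (by omega), Fin.natCast_self, zero_sub]
    norm_num
  rw [h]; ring

lemma ite_or_add {p q : Prop} [Decidable p] [Decidable q] (h : ¬(p ∧ q)) (x : ℝ) :
    (if p ∨ q then x else 0) = (if p then x else 0) + (if q then x else 0) := by
  by_cases hp : p <;> by_cases hq : q <;> simp [hp, hq] <;> exact absurd ⟨hp, hq⟩ h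

lemma sum_subtype_ind {α : Type*} [Fintype α] [DecidableEq α] (s : Finset α) (c : α)
    (hc : c ∈ s) (x : ℝ) :
    ∑ b : ↥s, (if b.1 = c then x else 0) = x := by
  rw [Finset.sum_coe_sort s (fun k => if k = c then x else 0),
    Finset.sum_ite_eq' s c (fun _ => x), if_pos hc]

lemma inv_two_smul_one {m : Type*} [Fintype m] [DecidableEq m] :
    ((2:ℝ) • (1 : Matrix m m ℝ))⁻¹ = (2⁻¹ : ℝ) • 1 := by
  apply Matrix.inv_eq_right_inv
  rw [Matrix.smul_mul, Matrix.mul_smul, Matrix.one_mul, smul_smul]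
  norm_num

include hn hdvd in
lemma key_sum (a b : Fin n) (ha : a.val % 2 = 0) (hb : b.val % 2 = 0) :
    ∑ k : ↥((Finset.univ.filter fun i : Fin n => i.1 % 2 = 0)ᶜ),
        lap (Wr n) a k.1 * lap (Wr n) k.1 b
      = Wr n (a + 1) b + Wr n (a - 1) b := by
  classical
  set V1 : Finset (Fin n) := Finset.univ.filter (fun i => i.1 % 2 = 0) with hV1
  have hodd : ∀ k : Fin n, k ∈ V1ᶜ → k.val % 2 = 1 := by
    intro k hk
    simp only [hV1, Finset.mem_compl, Finset.mem_filter, Finset.mem_univ, true_and] at hk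
    omega
  rw [Finset.sum_coe_sort (V1ᶜ) (fun k => lap (Wr n) a k * lap (Wr n) k b)]
  have h2 : ∀ k ∈ V1ᶜ, lap (Wr n) a k * lap (Wr n) k b = Wr n a k * Wr n k b := by
    intro k hk
    have hk1 := hodd k hk
    have hak : a ≠ k := fun h => by rw [h] at ha; omega
    have hkb : k ≠ b := fun h => by rw [← h] at hb; omega
    rw [lap_Wr hn, lap_Wr hn, if_neg hak, if_neg hkb]
    ring
  rw [Finset.sum_congr rfl h2]
  have h3 : ∑ k ∈ V1ᶜ, Wr n a k * Wr n k b = ∑ k, Wr n a k * Wr n k b := by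
    apply Finset.sum_subset (Finset.subset_univ _)
    intro k _ hk
    have hk0 : k ∈ V1 := by simpa using hk
    have hk1 : k.val % 2 = 0 := by
      simp only [hV1, Finset.mem_filter, Finset.mem_univ, true_and] at hk0
      exact hk0
    rw [Wr_eq_zero_of_parity hn hdvd a k (by omega), zero_mul]
  rw [h3, Wr_sum hn (fun k => Wr n k b) a]
end ring

/-- Kron reduction of the unit-weight ring graph on `2N` vertices (`N ≥ 3`) onto the
even-indexed vertices is the ring graph on those `N` vertices in which consecutive kept
vertices (`2i` and `2i + 2` mod `2N`) are joined by edges of weight `1/2`. -/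
theorem kron_reduction_ring_graph
    {N : ℕ} (hN : 3 ≤ N) :
    kron
        (lap (Matrix.of fun i j : Fin (2 * N) =>
          if (i.1 + 1) % (2 * N) = j.1 ∨ (j.1 + 1) % (2 * N) = i.1 then (1 : ℝ) else 0))
        (Finset.univ.filter fun i : Fin (2 * N) => i.1 % 2 = 0) =
      lap (Matrix.of
        fun a b : ↥(Finset.univ.filter fun i : Fin (2 * N) => i.1 % 2 = 0) =>
          if (a.1.1 + 2) % (2 * N) = b.1.1 ∨ (b.1.1 + 2) % (2 * N) = a.1.1 then
            (1 / 2 : ℝ) else 0) := by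
  have hn : 6 ≤ 2 * N := by omega
  haveI : NeZero (2 * N) := ⟨by omega⟩
  have hdvd : (2 : ℕ) ∣ 2 * N := ⟨N, rfl⟩
  rw [W_eq hn]
  have hmem : ∀ k : Fin (2 * N),
      k ∈ (Finset.univ.filter fun i : Fin (2 * N) => i.1 % 2 = 0) ↔ k.val % 2 = 0 := by
    intro k; simp
  have hodd : ∀ k : Fin (2 * N),
      k ∈ (Finset.univ.filter fun i : Fin (2 * N) => i.1 % 2 = 0)ᶜ → k.val % 2 = 1 := by
    intro k hk; rw [Finset.mem_compl, hmem] at hk; omega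
  have hcast2 : ((2 : ℕ) : Fin (2 * N)) = (2 : Fin (2 * N)) := by norm_num
  have hLoo : (lap (Wr (2 * N))).submatrix
        (Subtype.val : ↥((Finset.univ.filter fun i : Fin (2 * N) => i.1 % 2 = 0)ᶜ) → _)
        (Subtype.val : ↥((Finset.univ.filter fun i : Fin (2 * N) => i.1 % 2 = 0)ᶜ) → _)
      = (2 : ℝ) • 1 := by
    ext k l
    rw [Matrix.submatrix_apply, lap_Wr hn,
      Wr_eq_zero_of_parity hn hdvd _ _ (by rw [hodd k.1 k.2, hodd l.1 l.2]),
      Matrix.smul_apply, Matrix.one_apply]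
    rcases eq_or_ne k l with h | h
    · rw [if_pos (by rw [h]), if_pos h]; norm_num
    · rw [if_neg (fun hh => h (Subtype.ext hh)), if_neg h]; norm_num
  simp only [kron]
  rw [hLoo, inv_two_smul_one, Matrix.mul_smul, Matrix.mul_one, Matrix.smul_mul]
  ext a b
  have ha : a.1.val % 2 = 0 := (hmem a.1).mp a.2
  have hb : b.1.val % 2 = 0 := (hmem b.1).mp b.2
  have hne24 : a.1 + 2 ≠ a.1 - 2 := by
    intro h
    have h4 := sub_eq_zero_of_eq h
    rw [show (a.1 + 2) - (a.1 - 2) = 4 by ring] at h4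
    exact four_ne hn h4
  -- entry rewrite of the RHS weight matrix
  have hrw : ∀ c : ↥(Finset.univ.filter fun i : Fin (2 * N) => i.1 % 2 = 0),
      (Matrix.of (fun a b : ↥(Finset.univ.filter fun i : Fin (2 * N) => i.1 % 2 = 0) =>
        if (a.1.1 + 2) % (2 * N) = b.1.1 ∨ (b.1.1 + 2) % (2 * N) = a.1.1 then
          (1 / 2 : ℝ) else 0)) a c
      = (if c.1 = a.1 + 2 then (1 / 2 : ℝ) else 0)
        + (if c.1 = a.1 - 2 then (1 / 2 : ℝ) else 0) := by
    intro c
    have e1 : ((a.1.1 + 2) % (2 * N) = c.1.1) ↔ (c.1 = a.1 + 2) := cond_iff hn a.1 c.1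
    have e2 : ((c.1.1 + 2) % (2 * N) = a.1.1) ↔ (c.1 = a.1 - 2) := by
      rw [cond_iff hn]
      constructor
      · intro h; rw [h]; ring
      · intro h; rw [h]; ring
    simp only [Matrix.of_apply, e1, e2]
    exact ite_or_add (fun h => hne24 (h.1.symm.trans h.2)) _
  have m1 : a.1 + 2 ∈ (Finset.univ.filter fun i : Fin (2 * N) => i.1 % 2 = 0) := by
    rw [hmem]
    have hp := parity_add hn hdvd a.1 2
    rw [hcast2] at hp
    omega
  have m2 : a.1 - 2 ∈ (Finset.univ.filter fun i : Fin (2 * N) => i.1 % 2 = 0) := by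
    rw [hmem, sub_two hn]
    have hp := parity_add hn hdvd a.1 (2 * N - 2)
    omega
  have hdeg : deg (Matrix.of (fun a b : ↥(Finset.univ.filter fun i : Fin (2 * N) => i.1 % 2 = 0) =>
        if (a.1.1 + 2) % (2 * N) = b.1.1 ∨ (b.1.1 + 2) % (2 * N) = a.1.1 then
          (1 / 2 : ℝ) else 0)) a = 1 := by
    rw [deg]
    simp only [hrw]
    rw [Finset.sum_add_distrib, sum_subtype_ind _ _ m1, sum_subtype_ind _ _ m2]
    norm_num
  -- expand LHS entry
  rw [Matrix.sub_apply, Matrix.smul_apply, Matrix.submatrix_apply, Matrix.mul_apply,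
    smul_eq_mul]
  simp only [Matrix.submatrix_apply]
  rw [key_sum hn hdvd a.1 b.1 ha hb]
  rw [lap_Wr hn, Wr_eq_zero_of_parity hn hdvd a.1 b.1 (by omega)]
  rw [Wr_apply hn (a.1 + 1) b.1, Wr_apply hn (a.1 - 1) b.1]
  rw [show a.1 + 1 + 1 = a.1 + 2 by ring, show a.1 + 1 - 1 = a.1 by ring,
    show a.1 - 1 + 1 = a.1 by ring, show a.1 - 1 - 1 = a.1 - 2 by ring]
  -- expand RHS entry
  rw [lap, Matrix.sub_apply, Matrix.diagonal_apply, hdeg, hrw b]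
  -- final arithmetic
  have c1 : (if a.1 = b.1 then (2 : ℝ) else 0) = 2 * (if b.1 = a.1 then (1 : ℝ) else 0) := by
    rcases eq_or_ne a.1 b.1 with h | h
    · rw [if_pos h, if_pos h.symm]; norm_num
    · rw [if_neg h, if_neg (fun hh => h hh.symm)]; norm_num
  have c2 : (if a = b then (1 : ℝ) else 0) = (if b.1 = a.1 then (1 : ℝ) else 0) := by
    rcases eq_or_ne a b with h | h
    · rw [if_pos h, if_pos (by rw [h])]
    · rw [if_neg h, if_neg (fun hh => h (Subtype.ext hh.symm))]
  have chalf : ∀ (p : Prop) (_ : Decidable p),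
      (if p then (1 / 2 : ℝ) else 0) = (1 / 2) * (if p then (1 : ℝ) else 0) := by
    intro p hp; split <;> norm_num
  rw [c1, c2, chalf _ _, chalf _ _]
  ring
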